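/- Let G = (V, E) be a graph with maximum degree at most Δ, let s ∈ V, and let V_i be the set of vertices at distance i from s. Fix a layer i and suppose sets X₀, …, X_{j−1} ⊆ V_i have been chosen. Define Z_j(v) = N_{i+1}(v) \ ⋃_{k<j} ⋃_{x ∈ X_k} N_{i+1}(x), where N_{i+1}(v) is the set of neighbors of v in V_{i+1}. If each X_k is a maximal subset of V_i \ (X₀ ∪ ⋯ ∪ X_{k−1}) whose members have pairwise disjoint sets Z_k, then for every v ∈ V_i \ (X₀ ∪ ⋯ ∪ X_{j−1}) we have |Z_j(v)| ≤ Δ − j. Consequently X₀ ∪ X₁ ∪ ⋯ ∪ X_Δ = V_i. -/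

import Mathlib

/-- The neighbors of `v` lying in layer `i + 1` (distance `i + 1` from `s`). -/
def upNbr {V : Type*} (G : SimpleGraph V) (s : V) (i : ℕ) (v : V) : Set V :=
  {u | G.Adj v u ∧ G.dist s u = i + 1}

/-- `Z_j(v)`: the up-neighbors of `v` not already covered by the up-neighborhoods of the
members of `X₀, …, X_{j-1}`. -/
def Zset {V : Type*} (G : SimpleGraph V) (s : V) (i : ℕ) (X : ℕ → Finset V)
    (j : ℕ) (v : V) : Set V :=
  upNbr G s i v \ ⋃ (k : ℕ) (_ : k < j), ⋃ x ∈ (X k : Set V), upNbr G s i x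

/-- for the greedy layered decomposition `X₀, X₁, …` of layer `i`
(each `X_k` a maximal subset of the remaining vertices of layer `i` whose `Z_k`-sets are
pairwise disjoint) in a graph of maximum degree ≤ `Δ`, every vertex of layer `i` not in
`X₀ ∪ ⋯ ∪ X_{j-1}` satisfies `|Z_j(v)| ≤ Δ − j`; consequently `X₀ ∪ ⋯ ∪ X_Δ` covers
layer `i`. -/
theorem stmt11 {V : Type*} [Fintype V] (G : SimpleGraph V) (s : V) (i Δ : ℕ)
    (X : ℕ → Finset V)
    (hdeg : ∀ v, (G.neighborSet v).ncard ≤ Δ)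
    (hmem : ∀ k, k ≤ Δ → ∀ v ∈ X k, G.dist s v = i ∧ ∀ k', k' < k → v ∉ X k')
    (hdisj : ∀ k, k ≤ Δ → ∀ u ∈ X k, ∀ v ∈ X k, u ≠ v →
      Zset G s i X k u ∩ Zset G s i X k v = ∅)
    (hmax : ∀ k, k ≤ Δ → ∀ v, G.dist s v = i → (∀ k', k' ≤ k → v ∉ X k') →
      ∃ x ∈ X k, (Zset G s i X k v ∩ Zset G s i X k x).Nonempty) :
    (∀ j, j ≤ Δ → ∀ v, G.dist s v = i → (∀ k, k < j → v ∉ X k) →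
      (Zset G s i X j v).ncard ≤ Δ - j) ∧
    (∀ v, G.dist s v = i → ∃ k, k ≤ Δ ∧ v ∈ X k) := by
  classical
  have key : ∀ j, j ≤ Δ → ∀ v, G.dist s v = i → (∀ k, k < j → v ∉ X k) →
      (Zset G s i X j v).ncard ≤ Δ - j := by
    intro j
    induction j with
    | zero =>
      intro _ v _ _
      simp only [Nat.sub_zero]
      calc (Zset G s i X 0 v).ncard ≤ (G.neighborSet v).ncard := by
            apply Set.ncard_le_ncard _ (Set.toFinite _)
            intro u hu
            exact hu.1.1
        _ ≤ Δ := hdeg v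
    | succ j ih =>
      intro hjΔ v hv hnot
      have hjΔ' : j ≤ Δ := Nat.le_of_succ_le hjΔ
      have hZj : (Zset G s i X j v).ncard ≤ Δ - j :=
        ih hjΔ' v hv (fun k hk => hnot k (Nat.lt_succ_of_lt hk))
      obtain ⟨x, hx, w, hw⟩ := hmax j hjΔ' v hv
        (fun k' hk' => hnot k' (Nat.lt_succ_of_le hk'))
      have hwv : w ∈ Zset G s i X j v := hw.1
      have hwx : w ∈ upNbr G s i x := hw.2.1
      have hsub : Zset G s i X (j + 1) v ⊆ Zset G s i X j v \ {w} := by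
        intro u hu
        refine ⟨⟨hu.1, fun hmem' => hu.2 ?_⟩, fun huw => hu.2 ?_⟩
        · simp only [Set.mem_iUnion] at hmem' ⊢
          obtain ⟨k, hk, x', hx', hux'⟩ := hmem'
          exact ⟨k, Nat.lt_succ_of_lt hk, x', hx', hux'⟩
        · simp only [Set.mem_iUnion]
          exact ⟨j, Nat.lt_succ_self j, x, hx, huw ▸ hwx⟩
      calc (Zset G s i X (j + 1) v).ncard
          ≤ (Zset G s i X j v \ {w}).ncard :=
            Set.ncard_le_ncard hsub (Set.toFinite _)
        _ = (Zset G s i X j v).ncard - 1 :=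
            Set.ncard_diff_singleton_of_mem hwv
        _ ≤ (Δ - j) - 1 := Nat.sub_le_sub_right hZj 1
        _ = Δ - (j + 1) := by omega
  refine ⟨key, fun v hv => ?_⟩
  by_contra hcon
  push_neg at hcon
  have hnot : ∀ k, k < Δ → v ∉ X k := fun k hk => hcon k (Nat.le_of_lt hk)
  have h0 : (Zset G s i X Δ v).ncard ≤ 0 := by
    simpa using key Δ le_rfl v hv hnot
  have hempty : Zset G s i X Δ v = ∅ :=
    ((Set.ncard_eq_zero (Set.toFinite _)).mp (Nat.le_zero.mp h0))
  obtain ⟨x, hx, w, hw⟩ := hmax Δ le_rfl v hv (fun k' hk' => hcon k' hk')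
  exact absurd hw.1 (by simp [hempty])
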